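/- Assume e ≥ 2. For each k = 1, …, e−1, the diagonal entries of U^{(k)} are equal, with U^{(k)}₁₁ = U^{(k)}₂₂ = ∏_{l=0}^{k−1} d_•^{(l)}(1) / (∏_{l=0}^{k−1} m₁^{(l)}(2) · ∏_{l=0}^{k−1} m₂^{(l)}(1)); moreover the entry M^{(k)}₂₂ = 1/U^{(k)}₂₂ of M^{(k)} = sw(U^{(k)}) is a positive integer. -/

import Mathlib

/-- The data of a reduced irreducible quasi-ordinary prototype surface branch
`ζ = Σ_{j=1}^e x₁^{λ_{1,j}} x₂^{λ_{2,j}}` together with, for each choice `i ∈ {1,2}`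
of the recursion, the derived exponent sequences `λ^{(k)}_{u,j}(i)`, the lowest-terms
representations `λ^{(k)}_{u,1}(i) = n_u^{(k)}(i) / m_u^{(k)}(i)` of the leading
exponents, and the minimal nonnegative integers `r_i^{(k)}, s_i^{(k)}` with
`m_ĩ^{(k)}(i)·s_i^{(k)} − n_ĩ^{(k)}(i)·r_i^{(k)} = 1`.

The `Bool` index `false` corresponds to the index `1` of the paper and `true` to `2`;
for an index `i`, the other index `ĩ` is `!i`. -/
structure QOData where
  /-- the number `e ≥ 1` of characteristic terms -/
  e : ℕ
  he : 1 ≤ e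
  /-- the characteristic exponents `λ_{u,j}` for `u ∈ {1,2}`, `j = 1,…,e` -/
  lam0 : Bool → ℕ → ℚ
  /-- the derived exponents `λ^{(k)}_{u,j}(i)`; the arguments are, in order, `i u k j`,
  with `k = 0,…,e−1` and `j = 1,…,e−k` -/
  lam : Bool → Bool → ℕ → ℕ → ℚ
  /-- the numerators `n_u^{(k)}(i)`; the arguments are, in order, `i u k` -/
  n : Bool → Bool → ℕ → ℤ
  /-- the denominators `m_u^{(k)}(i) ≥ 1`; the arguments are, in order, `i u k` -/
  m : Bool → Bool → ℕ → ℕ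
  /-- `r_i^{(k)}`; the arguments are, in order, `i k` -/
  r : Bool → ℕ → ℕ
  /-- `s_i^{(k)}`; the arguments are, in order, `i k` -/
  s : Bool → ℕ → ℕ
  /-- the leading exponents are positive -/
  pos : ∀ u, 0 < lam0 u 1
  /-- the exponents are nondecreasing in `j` -/
  mono : ∀ u j, 1 ≤ j → j < e → lam0 u j ≤ lam0 u (j + 1)
  /-- each characteristic pair is essential: it does not lie in the subgroup of `ℚ²`
  generated by `ℤ²` together with the earlier pairs -/
  essential : ∀ j, 1 ≤ j → j ≤ e →
    (lam0 false j, lam0 true j) ∉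
      AddSubgroup.closure
        ((Set.range fun p : ℤ × ℤ => ((p.1 : ℚ), (p.2 : ℚ))) ∪
          {q : ℚ × ℚ | ∃ l, 1 ≤ l ∧ l < j ∧ q = (lam0 false l, lam0 true l)})
  /-- `λ^{(0)}_{u,j}(i) = λ_{u,j}` -/
  base : ∀ i u j, lam i u 0 j = lam0 u j
  /-- the denominators are at least 1 -/
  m_pos : ∀ i u k, k ≤ e - 1 → 1 ≤ m i u k
  /-- the leading exponents are written in lowest terms -/
  cop : ∀ i u k, k ≤ e - 1 → Int.gcd (n i u k) (m i u k : ℤ) = 1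
  /-- `λ^{(k)}_{u,1}(i) = n_u^{(k)}(i) / m_u^{(k)}(i)` -/
  lead : ∀ i u k, k ≤ e - 1 → lam i u k 1 = (n i u k : ℚ) / (m i u k : ℚ)
  /-- `m_ĩ^{(k)}(i)·s_i^{(k)} − n_ĩ^{(k)}(i)·r_i^{(k)} = 1` -/
  rs_det : ∀ i k, k ≤ e - 1 →
    (m i (!i) k : ℤ) * (s i k : ℤ) - n i (!i) k * (r i k : ℤ) = 1
  /-- `r_i^{(k)}` and `s_i^{(k)}` are the smallest nonnegative integers satisfying
  the determinant condition -/
  rs_min : ∀ i k, k ≤ e - 1 → ∀ r' s' : ℕ,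
    (m i (!i) k : ℤ) * (s' : ℤ) - n i (!i) k * (r' : ℤ) = 1 → r i k ≤ r' ∧ s i k ≤ s'
  /-- the recursion for `λ^{(k+1)}_{ĩ,j}(i)`, where `d_•^{(k)}(i) = lcm(m₁^{(k)}(i), m₂^{(k)}(i))` -/
  rec_other : ∀ i k j, k + 1 ≤ e - 1 → 1 ≤ j → j ≤ e - (k + 1) →
    lam i (!i) (k + 1) j =
      (m i (!i) k : ℚ) *
        (lam i (!i) k (j + 1) - lam i (!i) k 1 +
          (Nat.lcm (m i false k) (m i true k) : ℚ) * lam i (!i) k 1)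
  /-- the recursion for `λ^{(k+1)}_{i,j}(i)`, where
  `b_i^{(k)} = d_•^{(k)}(i) / m_ĩ^{(k)}(i)` -/
  rec_self : ∀ i k j, k + 1 ≤ e - 1 → 1 ≤ j → j ≤ e - (k + 1) →
    lam i i (k + 1) j =
      ((Nat.lcm (m i false k) (m i true k) / m i (!i) k : ℕ) : ℚ) *
        (lam i i k (j + 1) - lam i i k 1 +
          (Nat.lcm (m i false k) (m i true k) : ℚ) * lam i i k 1) +
      ((Nat.lcm (m i false k) (m i true k) / m i (!i) k : ℕ) : ℚ) * (r i k : ℚ) *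
        lam i i k 1 * lam i (!i) (k + 1) j

namespace QOData

variable (D : QOData)

/-- `d_•^{(k)}(i) = lcm(m₁^{(k)}(i), m₂^{(k)}(i))` -/
def dd (i : Bool) (k : ℕ) : ℕ := Nat.lcm (D.m i false k) (D.m i true k)

/-- `b_i^{(k)} = d_•^{(k)}(i) / m_ĩ^{(k)}(i)` -/
def b (i : Bool) (k : ℕ) : ℕ := D.dd i k / D.m i (!i) k

/-- `c_•^{(k)}(i) = gcd(n₁^{(k)}(i), n₂^{(k)}(i))` -/
def c (i : Bool) (k : ℕ) : ℕ := Int.gcd (D.n i false k) (D.n i true k)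

/-- `d^{(k)}(i) = ∏_{l=k}^{e−1} d_•^{(l)}(i)`, the degree of the `k`-th derived surface -/
def dTot (i : Bool) (k : ℕ) : ℕ := ∏ l ∈ Finset.Ico k D.e, D.dd i l

end QOData
/-- For a 2×2 matrix `U` over a field with `U 1 1 ≠ 0` and determinant `Δ`,
`sw U = [[Δ/U₂₂, U₁₂/U₂₂], [−U₂₁/U₂₂, 1/U₂₂]]`. -/
def sw (U : Matrix (Fin 2) (Fin 2) ℚ) : Matrix (Fin 2) (Fin 2) ℚ :=
  !![U.det / U 1 1, U 0 1 / U 1 1; -(U 1 0) / U 1 1, 1 / U 1 1]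

namespace QOData

/-- The auxiliary matrices `U^{(k)}` of the paper:
`U^{(1)} = [[b₁/m₁, b₁·r₁·λ_{1,1}], [b₂·r₂·λ_{2,1}, b₂/m₂]]` and, for `k ≥ 1`,
`U^{(k+1)}₁₁ = (b₁^{(k)}/m₁^{(k)}(2))·U^{(k)}₁₁`,
`U^{(k+1)}₁₂ = (b₁^{(k)}/m₂^{(k)}(1))·U^{(k)}₁₂ + b₁^{(k)}·r₁^{(k)}·λ^{(k)}_{1,1}(1)`,
`U^{(k+1)}₂₁ = (b₂^{(k)}/m₁^{(k)}(2))·U^{(k)}₂₁ + b₂^{(k)}·r₂^{(k)}·λ^{(k)}_{2,1}(2)`,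
`U^{(k+1)}₂₂ = (b₂^{(k)}/m₂^{(k)}(1))·U^{(k)}₂₂`. -/
def Umat (D : QOData) : ℕ → Matrix (Fin 2) (Fin 2) ℚ
  | 0 => 1
  | 1 =>
    !![(D.b false 0 : ℚ) / (D.m false false 0 : ℚ),
        (D.b false 0 : ℚ) * (D.r false 0 : ℚ) * D.lam0 false 1;
      (D.b true 0 : ℚ) * (D.r true 0 : ℚ) * D.lam0 true 1,
        (D.b true 0 : ℚ) / (D.m true true 0 : ℚ)]
  | (k + 2) =>
    !![((D.b false (k + 1) : ℚ) / (D.m true false (k + 1) : ℚ)) * D.Umat (k + 1) 0 0,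
        ((D.b false (k + 1) : ℚ) / (D.m false true (k + 1) : ℚ)) * D.Umat (k + 1) 0 1 +
          (D.b false (k + 1) : ℚ) * (D.r false (k + 1) : ℚ) * D.lam false false (k + 1) 1;
      ((D.b true (k + 1) : ℚ) / (D.m true false (k + 1) : ℚ)) * D.Umat (k + 1) 1 0 +
          (D.b true (k + 1) : ℚ) * (D.r true (k + 1) : ℚ) * D.lam true true (k + 1) 1,
        ((D.b true (k + 1) : ℚ) / (D.m false true (k + 1) : ℚ)) * D.Umat (k + 1) 1 1]

end QOData

namespace QOProof
/-- `q` is an integer -/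
def IsInt (q : ℚ) : Prop := ∃ z : ℤ, q = (z : ℚ)

lemma isInt_int (z : ℤ) : IsInt (z : ℚ) := ⟨z, rfl⟩
lemma isInt_nat (n : ℕ) : IsInt (n : ℚ) := ⟨n, by push_cast; ring⟩
lemma isInt_zero : IsInt 0 := ⟨0, by norm_num⟩
lemma isInt_one : IsInt 1 := ⟨1, by norm_num⟩
lemma IsInt.add {a b : ℚ} (ha : IsInt a) (hb : IsInt b) : IsInt (a + b) := by
  obtain ⟨x, rfl⟩ := ha; obtain ⟨y, rfl⟩ := hb; exact ⟨x + y, by push_cast; ring⟩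
lemma IsInt.mul {a b : ℚ} (ha : IsInt a) (hb : IsInt b) : IsInt (a * b) := by
  obtain ⟨x, rfl⟩ := ha; obtain ⟨y, rfl⟩ := hb; exact ⟨x * y, by push_cast; ring⟩
lemma IsInt.neg {a : ℚ} (ha : IsInt a) : IsInt (-a) := by
  obtain ⟨x, rfl⟩ := ha; exact ⟨-x, by push_cast; ring⟩
lemma IsInt.sub {a b : ℚ} (ha : IsInt a) (hb : IsInt b) : IsInt (a - b) := by
  obtain ⟨x, rfl⟩ := ha; obtain ⟨y, rfl⟩ := hb; exact ⟨x - y, by push_cast; ring⟩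

/-- vectors in ℚ², indexed by `Bool` -/
abbrev Vec := Bool → ℚ
/-- 2×2 matrices over ℚ, indexed by `Bool` -/
abbrev Mat := Bool → Bool → ℚ

def app (M : Mat) (x : Vec) : Vec := fun u => M u false * x false + M u true * x true
def mmul (M N : Mat) : Mat := fun u v => M u false * N false v + M u true * N true v
def mdet (M : Mat) : ℚ := M false false * M true true - M false true * M true false
def idm : Mat := fun u v => if u = v then 1 else 0
def evec (v : Bool) : Vec := fun w => if w = v then 1 else 0
def minv (M : Mat) : Mat :=
  fun u v => (if u = v then M (!u) (!v) else -(M u v)) / mdet M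

def IntVec (x : Vec) : Prop := ∀ u, IsInt (x u)

lemma app_mmul (M N : Mat) (x : Vec) : app (mmul M N) x = app M (app N x) := by
  funext u; simp only [app, mmul]; ring
lemma mdet_mmul (M N : Mat) : mdet (mmul M N) = mdet M * mdet N := by
  simp only [mdet, mmul]; ring
lemma app_evec (M : Mat) (v : Bool) : app M (evec v) = fun u => M u v := by
  funext u; cases v <;> simp [app, evec]
lemma app_idm (x : Vec) : app idm x = x := by
  funext u; cases u <;> simp [app, idm]
lemma mdet_idm : mdet idm = 1 := by simp [mdet, idm]
lemma app_sub_smul (M : Mat) (x y : Vec) (a : ℚ) :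
    app M (fun u => x u - a * y u) = fun u => app M x u - a * app M y u := by
  funext u; simp only [app]; ring
lemma app_minv (M : Mat) (h : mdet M ≠ 0) (x : Vec) : app M (app (minv M) x) = x := by
  have h' : M false false * M true true - M false true * M true false ≠ 0 := h
  funext u
  cases u
  · simp only [app, minv, mdet, Bool.not_false, Bool.not_true, Bool.false_eq_true,
      Bool.true_eq_false, if_false, if_true, reduceIte]
    field_simp
    ring
  · simp only [app, minv, mdet, Bool.not_false, Bool.not_true, Bool.false_eq_true,
      Bool.true_eq_false, if_false, if_true, reduceIte]
    field_simp
    ring_nf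
    have h'' : -(M true false * M false true) + M true true * M false false ≠ 0 := by
      intro h0; apply h'; linarith
    field_simp
lemma mdet_minv (M : Mat) (h : mdet M ≠ 0) : mdet (minv M) = (mdet M)⁻¹ := by
  have h' : M false false * M true true - M false true * M true false ≠ 0 := h
  simp only [minv, mdet, Bool.not_false, Bool.not_true, Bool.false_eq_true,
      Bool.true_eq_false, if_false, if_true, reduceIte]
  have hd : M true true * M false false - -M false true * -M true false ≠ 0 := by
    rw [show M true true * M false false - -M false true * -M true false =
      M false false * M true true - M false true * M true false from by ring]
    exact h'
  rw [div_mul_div_comm, div_mul_div_comm, div_sub_div_same, eq_comm, inv_eq_iff_eq_inv,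
    inv_div, eq_div_iff hd]
  ring
lemma mdet_isInt (M : Mat) (h : ∀ u v, IsInt (M u v)) : IsInt (mdet M) :=
  ((h false false).mul (h true true)).sub ((h false true).mul (h true false))
lemma IntVec.app {M : Mat} {x : Vec} (hM : ∀ u v, IsInt (M u v)) (hx : IntVec x) :
    IntVec (app M x) := fun u => ((hM u false).mul (hx false)).add ((hM u true).mul (hx true))

/-- The leading data of one derivation step: `ms, ns` are denominator/numerator of the
leading exponent in the distinguished (self) variable, `mo, no` in the other variable,
and `r, s` satisfy `mo·s − no·r = 1`. -/
structure SD where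
  ms : ℕ
  mo : ℕ
  ns : ℤ
  no : ℤ
  r : ℕ
  s : ℕ
  hms : 0 < ms
  hmo : 0 < mo
  hcs : Int.gcd ns ms = 1
  hrs : (mo : ℤ) * s - no * r = 1

namespace SD
variable (S : SD)
def d : ℕ := Nat.lcm S.ms S.mo
def b : ℕ := S.d / S.mo
def q : ℕ := S.d / S.ms
def g : ℕ := Nat.gcd S.ms S.mo

lemma b_mul : S.b * S.mo = S.d := Nat.div_mul_cancel (Nat.dvd_lcm_right _ _)
lemma q_mul : S.q * S.ms = S.d := Nat.div_mul_cancel (Nat.dvd_lcm_left _ _)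
lemma d_pos : 0 < S.d := Nat.pos_of_ne_zero (Nat.lcm_ne_zero S.hms.ne' S.hmo.ne')
lemma b_pos : 0 < S.b := by
  rcases Nat.eq_zero_or_pos S.b with h | h
  · exfalso; have := S.b_mul; rw [h, zero_mul] at this; exact S.d_pos.ne this
  · exact h
lemma q_pos : 0 < S.q := by
  rcases Nat.eq_zero_or_pos S.q with h | h
  · exfalso; have := S.q_mul; rw [h, zero_mul] at this; exact S.d_pos.ne this
  · exact h
lemma g_pos : 0 < S.g := Nat.gcd_pos_of_pos_left _ S.hms
lemma bg : S.b * S.g = S.ms := by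
  have h1 : S.g * S.d = S.ms * S.mo := Nat.gcd_mul_lcm _ _
  have h2 : (S.b * S.g) * S.mo = S.ms * S.mo := by
    rw [mul_right_comm, ← h1, mul_comm S.g S.d, ← S.b_mul]
  exact Nat.eq_of_mul_eq_mul_right S.hmo h2
lemma qg : S.q * S.g = S.mo := by
  have h1 : S.g * S.d = S.ms * S.mo := Nat.gcd_mul_lcm _ _
  have h1' : S.g * S.d = S.mo * S.ms := by rw [h1]; ring
  have h2 : (S.q * S.g) * S.ms = S.mo * S.ms := by
    rw [mul_right_comm, ← h1', mul_comm S.g S.d, ← S.q_mul]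
  exact Nat.eq_of_mul_eq_mul_right S.hms h2
lemma cop_qb : Nat.Coprime S.q S.b := by
  have hq : S.q = S.mo / S.g := by rw [← S.qg, Nat.mul_div_cancel _ S.g_pos]
  have hb : S.b = S.ms / S.g := by rw [← S.bg, Nat.mul_div_cancel _ S.g_pos]
  rw [hq, hb]
  exact (Nat.coprime_div_gcd_div_gcd (Nat.gcd_pos_of_pos_left _ S.hms)).symm
lemma cop_nsb : Nat.Coprime S.ns.natAbs S.b := by
  have h1 : Nat.Coprime S.ns.natAbs S.ms := S.hcs
  exact Nat.Coprime.coprime_dvd_right ⟨S.g, S.bg.symm⟩ h1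
lemma exists_uv : ∃ U V : ℤ, (S.ns * S.q) * U + (S.b : ℤ) * V = 1 := by
  have h1 : Int.gcd (S.ns * S.q) (S.b : ℤ) = 1 := by
    have h2 : Nat.Coprime (S.ns * (S.q : ℤ)).natAbs S.b := by
      rw [Int.natAbs_mul, Int.natAbs_natCast]
      exact Nat.Coprime.mul S.cop_nsb (Nat.Coprime.symm (S.cop_qb.symm))
    simpa [Int.gcd, Int.natAbs_natCast] using h2
  refine ⟨Int.gcdA (S.ns * S.q) S.b, Int.gcdB (S.ns * S.q) S.b, ?_⟩
  have := Int.gcd_eq_gcd_ab (S.ns * S.q) (S.b : ℤ)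
  rw [h1] at this
  push_cast at this
  linarith [this]

-- ℚ-cast abbreviations
lemma msQ_ne : (S.ms : ℚ) ≠ 0 := Nat.cast_ne_zero.mpr S.hms.ne'
lemma moQ_ne : (S.mo : ℚ) ≠ 0 := Nat.cast_ne_zero.mpr S.hmo.ne'
lemma b_mulQ : (S.b : ℚ) * (S.mo : ℚ) = (S.d : ℚ) := by exact_mod_cast congrArg (Nat.cast (R := ℚ)) S.b_mul
lemma q_mulQ : (S.q : ℚ) * (S.ms : ℚ) = (S.d : ℚ) := by exact_mod_cast congrArg (Nat.cast (R := ℚ)) S.q_mul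
lemma rsQ : (S.mo : ℚ) * (S.s : ℚ) - (S.no : ℚ) * (S.r : ℚ) = 1 := by exact_mod_cast S.hrs

/-- the reduced leading vector components -/
def vs : ℚ := (S.ns : ℚ) / (S.ms : ℚ)
def vo : ℚ := (S.no : ℚ) / (S.mo : ℚ)

/-- G1: the "other" recursion in affine form -/
lemma G1 (lamo : ℚ) :
    (S.mo : ℚ) * (lamo - S.vo + (S.d : ℚ) * S.vo) =
      (S.mo : ℚ) * lamo + ((S.d : ℚ) - 1) * (S.no : ℚ) := by
  have h := S.moQ_ne
  simp only [vo]
  field_simp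
  ring

/-- G2: the "self" recursion in affine form -/
lemma G2 (lams lamo : ℚ) :
    (S.b : ℚ) * (lams - S.vs + (S.d : ℚ) * S.vs) +
      (S.b : ℚ) * (S.r : ℚ) * S.vs * ((S.mo : ℚ) * lamo + ((S.d : ℚ) - 1) * (S.no : ℚ)) =
    (S.b : ℚ) * lams + ((S.r : ℚ) * (S.ns : ℚ) * (S.q : ℚ)) * lamo +
      ((S.d : ℚ) - 1) * (S.ns : ℚ) * (S.q : ℚ) * (S.s : ℚ) := by
  have h := S.msQ_ne
  have h2 := S.moQ_ne
  have h3 := S.b_mulQ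
  have h4 := S.q_mulQ
  have h5 := S.rsQ
  simp only [vs]
  field_simp
  linear_combination
    (-((S.ns : ℚ) * S.r * lamo) - (S.ns : ℚ) * ((S.d : ℚ) - 1) * S.s) * h4
    + ((S.ns : ℚ) * S.r * lamo + (S.ns : ℚ) * ((S.d : ℚ) - 1) * S.s) * h3
    + (-((S.ns : ℚ) * ((S.d : ℚ) - 1) * S.b)) * h5
/-- G3: the image of the reduced leading vector is integral -/
lemma G3 : (S.b : ℚ) * S.vs + (S.r : ℚ) * (S.ns : ℚ) * (S.q : ℚ) * S.vo =
    ((S.q : ℚ) * (S.ns : ℚ) * (S.s : ℚ)) := by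
  have h := S.msQ_ne
  have h2 := S.moQ_ne
  have h3 := S.b_mulQ
  have h4 := S.q_mulQ
  have h5 := S.rsQ
  simp only [vs, vo]
  field_simp
  linear_combination ((S.ns : ℚ)) * h3 + ((S.ns : ℚ) * S.r * S.no - (S.ns : ℚ) * S.s * S.mo) * h4
    + (-((S.ns : ℚ) * S.d)) * h5
lemma G3o : (S.mo : ℚ) * S.vo = (S.no : ℚ) := by
  have h2 := S.moQ_ne
  simp only [vo]
  field_simp
/-- G4: explicit preimages of integer vectors under the step matrix -/
lemma G4 (p p' U V : ℤ) (hUV : (S.ns * S.q) * U + (S.b : ℤ) * V = 1) :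
    ((S.mo : ℚ) * (((p' * S.s - U * p * S.no : ℤ) : ℚ) +
        ((-(S.r : ℤ) * p' + S.mo * U * p : ℤ) : ℚ) * S.vo) = (p' : ℚ)) ∧
    ((S.b : ℚ) * (((p * V : ℤ) : ℚ) +
        ((-(S.r : ℤ) * p' + S.mo * U * p : ℤ) : ℚ) * S.vs) +
      (S.r : ℚ) * (S.ns : ℚ) * (S.q : ℚ) * (((p' * S.s - U * p * S.no : ℤ) : ℚ) +
        ((-(S.r : ℤ) * p' + S.mo * U * p : ℤ) : ℚ) * S.vo) = (p : ℚ)) := by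
  have h := S.msQ_ne
  have h2 := S.moQ_ne
  have h3 := S.b_mulQ
  have h4 := S.q_mulQ
  have h5 := S.rsQ
  have h6 : (S.ns : ℚ) * S.q * U + (S.b : ℚ) * V = 1 := by exact_mod_cast hUV
  constructor
  · push_cast
    simp only [vo]
    field_simp
    linear_combination ((p' : ℚ)) * h5
  · push_cast
    simp only [vs, vo]
    field_simp
    linear_combination
      ((p : ℚ) * S.ns * U * S.mo - (S.r : ℚ) * p' * S.ns) * h3
      + ((S.r : ℚ) * p' * S.ns - (p : ℚ) * S.ns * U * S.mo) * h4
      + ((S.r : ℚ) * p' * S.ns * S.ms * S.q) * h5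
      + ((p : ℚ) * S.ms * S.mo) * h6
end SD

variable (D : QOData)

/-- the step data of the recursion `i` at level `k` -/
def sd (i : Bool) (k : ℕ) (hk : k ≤ D.e - 1) : SD where
  ms := D.m i i k
  mo := D.m i (!i) k
  ns := D.n i i k
  no := D.n i (!i) k
  r := D.r i k
  s := D.s i k
  hms := D.m_pos i i k hk
  hmo := D.m_pos i (!i) k hk
  hcs := D.cop i i k hk
  hrs := D.rs_det i k hk

/-- `q_i^{(k)} = d_•^{(k)}(i)/m_i^{(k)}(i)` -/
def qq (i : Bool) (k : ℕ) : ℕ := D.dd i k / D.m i i k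

lemma sd_d (i : Bool) (k : ℕ) (hk : k ≤ D.e - 1) : (sd D i k hk).d = D.dd i k := by
  cases i
  · exact rfl
  · exact Nat.lcm_comm _ _

lemma sd_b (i : Bool) (k : ℕ) (hk : k ≤ D.e - 1) : (sd D i k hk).b = D.b i k := by
  show (sd D i k hk).d / _ = _
  rw [sd_d]; rfl

lemma sd_q (i : Bool) (k : ℕ) (hk : k ≤ D.e - 1) : (sd D i k hk).q = qq D i k := by
  show (sd D i k hk).d / _ = _
  rw [sd_d]; rfl

lemma sd_vs (i : Bool) (k : ℕ) (hk : k ≤ D.e - 1) : (sd D i k hk).vs = D.lam i i k 1 := by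
  rw [SD.vs, D.lead i i k hk]; rfl

lemma sd_vo (i : Bool) (k : ℕ) (hk : k ≤ D.e - 1) : (sd D i k hk).vo = D.lam i (!i) k 1 := by
  rw [SD.vo, D.lead i (!i) k hk]; rfl

/-- the step matrix of the recursion `i` at level `k` -/
def Am (i : Bool) (k : ℕ) : Mat := fun u v =>
  if u = i then
    (if v = i then (D.b i k : ℚ) else (D.r i k : ℚ) * (D.n i i k : ℚ) * (qq D i k : ℚ))
  else (if v = i then 0 else (D.m i (!i) k : ℚ))

lemma Am_isInt (i : Bool) (k : ℕ) : ∀ u v, IsInt (Am D i k u v) := by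
  intro u v
  unfold Am
  split
  · split
    · exact isInt_nat _
    · exact ((isInt_nat _).mul (isInt_int _)).mul (isInt_nat _)
  · split
    · exact isInt_zero
    · exact isInt_nat _

lemma app_Am (i : Bool) (k : ℕ) (x : Vec) :
    app (Am D i k) x i =
      (D.b i k : ℚ) * x i + ((D.r i k : ℚ) * (D.n i i k : ℚ) * (qq D i k : ℚ)) * x (!i) ∧
    app (Am D i k) x (!i) = (D.m i (!i) k : ℚ) * x (!i) := by
  cases i <;> constructor <;>
  · simp only [app, Am, Bool.not_false, Bool.not_true,
      Bool.false_eq_true, Bool.true_eq_false, if_false, if_true, reduceIte]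
    try ring

lemma mdet_Am (i : Bool) (k : ℕ) (hk : k ≤ D.e - 1) : mdet (Am D i k) = (D.dd i k : ℚ) := by
  have h := (sd D i k hk).b_mulQ
  rw [sd_b, sd_d] at h
  have h2 : ((sd D i k hk).mo : ℚ) = (D.m i (!i) k : ℚ) := rfl
  rw [h2] at h
  rw [← h]
  cases i <;>
  · simp only [mdet, Am, Bool.not_false, Bool.not_true, Bool.false_eq_true,
      Bool.true_eq_false, if_false, if_true, reduceIte]
    ring

/-- the accumulated inversion matrix of the recursion `i` -/
def Phi (i : Bool) : ℕ → Mat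
  | 0 => idm
  | (k + 1) => mmul (Am D i k) (Phi i k)


variable (D : QOData)

lemma bool_cases (u i : Bool) : u = i ∨ u = !i := by
  cases u <;> cases i <;> simp

lemma isInt_iff_add {v w : ℚ} (hw : IsInt w) : IsInt (v + w) ↔ IsInt v :=
  ⟨fun h => by simpa using h.sub hw, fun h => h.add hw⟩

/-- the recursion in affine form -/
lemma lam_step (i : Bool) (k j : ℕ) (hk : k + 1 ≤ D.e - 1) (hj : 1 ≤ j)
    (hj2 : j ≤ D.e - (k + 1)) :
    D.lam i (!i) (k + 1) j =
      (D.m i (!i) k : ℚ) * D.lam i (!i) k (j + 1) +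
        ((D.dd i k : ℚ) - 1) * (D.n i (!i) k : ℚ) ∧
    D.lam i i (k + 1) j =
      (D.b i k : ℚ) * D.lam i i k (j + 1) +
        ((D.r i k : ℚ) * (D.n i i k : ℚ) * (qq D i k : ℚ)) * D.lam i (!i) k (j + 1) +
        ((D.dd i k : ℚ) - 1) * (D.n i i k : ℚ) * (qq D i k : ℚ) * (D.s i k : ℚ) := by
  have hk' : k ≤ D.e - 1 := le_trans (Nat.le_succ k) hk
  set S := sd D i k hk' with hS
  have ed : (Nat.lcm (D.m i false k) (D.m i true k) : ℚ) = (S.d : ℚ) := by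
    rw [sd_d]; rfl
  have edd : (D.dd i k : ℚ) = (S.d : ℚ) := by rw [sd_d]
  have eb : (D.b i k : ℚ) = (S.b : ℚ) := by rw [sd_b]
  have eq' : (qq D i k : ℚ) = (S.q : ℚ) := by rw [sd_q]
  have evo : D.lam i (!i) k 1 = S.vo := (sd_vo D i k hk').symm
  have evs : D.lam i i k 1 = S.vs := (sd_vs D i k hk').symm
  have h1 : D.lam i (!i) (k + 1) j =
      (D.m i (!i) k : ℚ) * D.lam i (!i) k (j + 1) +
        ((D.dd i k : ℚ) - 1) * (D.n i (!i) k : ℚ) := by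
    rw [D.rec_other i k j hk hj hj2, ed, evo, edd]
    exact S.G1 _
  refine ⟨h1, ?_⟩
  rw [D.rec_self i k j hk hj hj2, h1]
  have hbq : ((Nat.lcm (D.m i false k) (D.m i true k) / D.m i (!i) k : ℕ) : ℚ) = (S.b : ℚ) := by
    rw [sd_b]; rfl
  rw [hbq, ed, evs, eb, eq', edd]
  exact S.G2 _ _

/-- membership step equivalence -/
lemma step_iff (i : Bool) (k : ℕ) (hk : k ≤ D.e - 1) (y : Vec) :
    IntVec (app (Am D i k) y) ↔
      ∃ a : ℤ, ∀ u, IsInt (y u - (a : ℚ) * D.lam i u k 1) := by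
  set S := sd D i k hk with hS
  have eb : (D.b i k : ℚ) = (S.b : ℚ) := by rw [sd_b]
  have eq' : (qq D i k : ℚ) = (S.q : ℚ) := by rw [sd_q]
  have evo : D.lam i (!i) k 1 = S.vo := (sd_vo D i k hk).symm
  have evs : D.lam i i k 1 = S.vs := (sd_vs D i k hk).symm
  have emo : (D.m i (!i) k : ℚ) = (S.mo : ℚ) := rfl
  have er : (D.r i k : ℚ) = (S.r : ℚ) := rfl
  have es : (D.s i k : ℚ) = (S.s : ℚ) := rfl
  have ens : (D.n i i k : ℚ) = (S.ns : ℚ) := rfl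
  have eno : (D.n i (!i) k : ℚ) = (S.no : ℚ) := rfl
  have hmone : (D.m i (!i) k : ℚ) ≠ 0 := by rw [emo]; exact S.moQ_ne
  have hbne : (D.b i k : ℚ) ≠ 0 := by
    rw [eb]; exact Nat.cast_ne_zero.mpr S.b_pos.ne'
  have G3D : (D.b i k : ℚ) * D.lam i i k 1 +
      (D.r i k : ℚ) * (D.n i i k : ℚ) * (qq D i k : ℚ) * D.lam i (!i) k 1 =
      (qq D i k : ℚ) * (D.n i i k : ℚ) * (D.s i k : ℚ) := by
    have h := S.G3
    rw [← eb, ← eq', ← evs, ← evo, ← er, ← es, ← ens] at h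
    linarith [h]
  have G3oD : (D.m i (!i) k : ℚ) * D.lam i (!i) k 1 = (D.n i (!i) k : ℚ) := by
    have h := S.G3o
    rw [← emo, ← evo, ← eno] at h
    exact h
  have happ := app_Am D i k y
  constructor
  · intro h
    obtain ⟨p, hp⟩ := h i
    obtain ⟨p', hp'⟩ := h (!i)
    obtain ⟨U, V, hUV⟩ := S.exists_uv
    obtain ⟨hG1, hG2⟩ := S.G4 p p' U V hUV
    rw [← emo, ← evo] at hG1
    rw [← eb, ← eq', ← evs, ← evo, ← er, ← ens] at hG2
    set a : ℤ := -(S.r : ℤ) * p' + S.mo * U * p with ha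
    refine ⟨a, ?_⟩
    have ho : y (!i) = ((p' * S.s - U * p * S.no : ℤ) : ℚ) + (a : ℚ) * D.lam i (!i) k 1 := by
      have h1 : (D.m i (!i) k : ℚ) * y (!i) = (p' : ℚ) := by
        rw [← happ.2, hp']
      exact mul_left_cancel₀ hmone (h1.trans hG1.symm)
    have hs : y i = ((p * V : ℤ) : ℚ) + (a : ℚ) * D.lam i i k 1 := by
      have h1 : (D.b i k : ℚ) * y i +
          (D.r i k : ℚ) * (D.n i i k : ℚ) * (qq D i k : ℚ) * y (!i) = (p : ℚ) := by
        rw [← happ.1, hp]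
      rw [ho] at h1
      have h2 : (D.b i k : ℚ) * y i =
          (D.b i k : ℚ) * (((p * V : ℤ) : ℚ) + (a : ℚ) * D.lam i i k 1) := by
        linarith [h1, hG2]
      exact mul_left_cancel₀ hbne h2
    intro u
    rcases bool_cases u i with h' | h' <;> rw [h']
    · rw [hs]; ring_nf; exact isInt_int _
    · rw [ho]; ring_nf; exact isInt_int _
  · rintro ⟨a, ha⟩ u
    rcases bool_cases u i with h' | h' <;> rw [h']
    · rw [happ.1]
      have h1 : (D.b i k : ℚ) * y i +
            (D.r i k : ℚ) * (D.n i i k : ℚ) * (qq D i k : ℚ) * y (!i) =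
          ((D.b i k : ℚ) * (y i - (a : ℚ) * D.lam i i k 1) +
            (D.r i k : ℚ) * (D.n i i k : ℚ) * (qq D i k : ℚ) *
              (y (!i) - (a : ℚ) * D.lam i (!i) k 1)) +
          (a : ℚ) * ((D.b i k : ℚ) * D.lam i i k 1 +
            (D.r i k : ℚ) * (D.n i i k : ℚ) * (qq D i k : ℚ) * D.lam i (!i) k 1) := by
        ring
      rw [h1, G3D]
      exact (((isInt_nat _).mul (ha i)).add
        ((((isInt_nat _).mul (isInt_int _)).mul (isInt_nat _)).mul (ha (!i)))).add
        ((isInt_int a).mul (((isInt_nat _).mul (isInt_int _)).mul (isInt_nat _)))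
    · rw [happ.2]
      have h1 : (D.m i (!i) k : ℚ) * y (!i) =
          (D.m i (!i) k : ℚ) * (y (!i) - (a : ℚ) * D.lam i (!i) k 1) +
            (a : ℚ) * ((D.m i (!i) k : ℚ) * D.lam i (!i) k 1) := by
        ring
      rw [h1, G3oD]
      exact ((isInt_nat _).mul (ha (!i))).add ((isInt_int a).mul (isInt_int _))


variable (D : QOData)

lemma mmul_reindex (M N : Mat) (u v i : Bool) :
    mmul M N u v = M u i * N i v + M u (!i) * N (!i) v := by
  cases i
  · rfl
  · show M u false * N false v + M u true * N true v = _
    simp only [Bool.not_true]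
    ring

lemma Am_e (i : Bool) (k : ℕ) :
    Am D i k i i = (D.b i k : ℚ) ∧
    Am D i k i (!i) = (D.r i k : ℚ) * (D.n i i k : ℚ) * (qq D i k : ℚ) ∧
    Am D i k (!i) i = 0 ∧
    Am D i k (!i) (!i) = (D.m i (!i) k : ℚ) := by
  cases i <;> refine ⟨?_, ?_, ?_, ?_⟩ <;> simp [Am]

lemma isInt_ddm1 (i : Bool) (k : ℕ) : IsInt ((D.dd i k : ℚ) - 1) :=
  ⟨(D.dd i k : ℤ) - 1, by push_cast; ring⟩

lemma master : ∀ k, k ≤ D.e - 1 →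
    (∀ i, Phi D i k (!i) i = 0) ∧
    (∀ i, Phi D i k (!i) (!i) = ∏ l ∈ Finset.range k, (D.m i (!i) l : ℚ)) ∧
    (∀ i, mdet (Phi D i k) = ∏ l ∈ Finset.range k, (D.dd i l : ℚ)) ∧
    (∀ i j, 1 ≤ j → j + k ≤ D.e → ∀ u,
      IsInt (app (Phi D i k) (fun w => D.lam0 w (j + k)) u - D.lam i u k j)) ∧
    (∀ x : Vec, IntVec (app (Phi D false k) x) ↔ IntVec (app (Phi D true k) x)) := by
  intro k
  induction k with
  | zero =>
    intro _
    refine ⟨?_, ?_, ?_, ?_, ?_⟩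
    · intro i; cases i <;> simp [Phi, idm]
    · intro i; simp [Phi, idm]
    · intro _; simpa [Phi] using mdet_idm
    · intro i j hj hje u
      show IsInt (app idm (fun w => D.lam0 w (j + 0)) u - D.lam i u 0 j)
      rw [app_idm]
      simp only [Nat.add_zero, D.base i u j, sub_self]
      exact isInt_zero
    · intro x; exact Iff.rfl
  | succ k IH =>
    intro hk1
    have hk : k ≤ D.e - 1 := Nat.le_of_succ_le hk1
    have hke : k + 1 ≤ D.e := by omega
    obtain ⟨P1, P2, P3, P4, P5⟩ := IH hk
    have hPhi : ∀ i, Phi D i (k + 1) = mmul (Am D i k) (Phi D i k) := fun i => rfl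
    refine ⟨?_, ?_, ?_, ?_, ?_⟩
    · intro i
      rw [hPhi i, mmul_reindex _ _ _ _ i, (Am_e D i k).2.2.1, (Am_e D i k).2.2.2, P1 i]
      ring
    · intro i
      rw [hPhi i, mmul_reindex _ _ _ _ i, (Am_e D i k).2.2.1, (Am_e D i k).2.2.2, P2 i,
        Finset.prod_range_succ]
      ring
    · intro i
      rw [hPhi i, mdet_mmul, mdet_Am D i k hk, P3 i, Finset.prod_range_succ]
      ring
    · intro i j hj hje u
      have hjk : j + (k + 1) = (j + 1) + k := by omega
      simp only [hjk, hPhi i, app_mmul]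
      set y : Vec := app (Phi D i k) (fun w => D.lam0 w ((j + 1) + k)) with hy
      have hyI : ∀ u, IsInt (y u - D.lam i u k (j + 1)) :=
        P4 i (j + 1) (by omega) (by omega)
      obtain ⟨hO, hSf⟩ := lam_step D i k j hk1 hj (by omega)
      have happ := app_Am D i k y
      rcases bool_cases u i with h' | h' <;> rw [h']
      · rw [happ.1, hSf]
        have h1 : (D.b i k : ℚ) * y i +
              (D.r i k : ℚ) * (D.n i i k : ℚ) * (qq D i k : ℚ) * y (!i) -
              ((D.b i k : ℚ) * D.lam i i k (j + 1) +
                (D.r i k : ℚ) * (D.n i i k : ℚ) * (qq D i k : ℚ) * D.lam i (!i) k (j + 1) +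
                ((D.dd i k : ℚ) - 1) * (D.n i i k : ℚ) * (qq D i k : ℚ) * (D.s i k : ℚ)) =
            (D.b i k : ℚ) * (y i - D.lam i i k (j + 1)) +
              (D.r i k : ℚ) * (D.n i i k : ℚ) * (qq D i k : ℚ) *
                (y (!i) - D.lam i (!i) k (j + 1)) -
              ((D.dd i k : ℚ) - 1) * (D.n i i k : ℚ) * (qq D i k : ℚ) * (D.s i k : ℚ) := by
          ring
        rw [h1]
        exact (((isInt_nat _).mul (hyI i)).add
          ((((isInt_nat _).mul (isInt_int _)).mul (isInt_nat _)).mul (hyI (!i)))).sub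
          ((((isInt_ddm1 D i k).mul (isInt_int _)).mul (isInt_nat _)).mul (isInt_nat _))
      · rw [happ.2, hO]
        have h1 : (D.m i (!i) k : ℚ) * y (!i) -
              ((D.m i (!i) k : ℚ) * D.lam i (!i) k (j + 1) +
                ((D.dd i k : ℚ) - 1) * (D.n i (!i) k : ℚ)) =
            (D.m i (!i) k : ℚ) * (y (!i) - D.lam i (!i) k (j + 1)) -
              ((D.dd i k : ℚ) - 1) * (D.n i (!i) k : ℚ) := by
          ring
        rw [h1]
        exact ((isInt_nat _).mul (hyI (!i))).sub ((isInt_ddm1 D i k).mul (isInt_int _))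
    · intro x
      have key : ∀ i, IntVec (app (Phi D i (k + 1)) x) ↔
          ∃ a : ℤ, IntVec (app (Phi D i k) (fun w => x w - (a : ℚ) * D.lam0 w (k + 1))) := by
        intro i
        have hI1 : ∀ u, IsInt (app (Phi D i k) (fun w => D.lam0 w (k + 1)) u -
            D.lam i u k 1) := by
          have h2 := P4 i 1 le_rfl (by omega)
          simpa only [show 1 + k = k + 1 from by omega] using h2
        have h3 : ∀ (a : ℤ) (u : Bool),
            app (Phi D i k) (fun w => x w - (a : ℚ) * D.lam0 w (k + 1)) u =
              (app (Phi D i k) x u - (a : ℚ) * D.lam i u k 1) -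
                (a : ℚ) * (app (Phi D i k) (fun w => D.lam0 w (k + 1)) u -
                  D.lam i u k 1) := by
          intro a u
          simp only [app]
          ring
        rw [hPhi i, app_mmul, step_iff D i k hk]
        constructor
        · rintro ⟨a, ha⟩
          refine ⟨a, fun u => ?_⟩
          rw [h3 a u]
          exact (ha u).sub ((isInt_int a).mul (hI1 u))
        · rintro ⟨a, ha⟩
          refine ⟨a, fun u => ?_⟩
          have h4 := ha u
          rw [h3 a u] at h4
          have h5 : app (Phi D i k) x u - (a : ℚ) * D.lam i u k 1 =
              (app (Phi D i k) (fun w => x w - (a : ℚ) * D.lam0 w (k + 1)) u) +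
                (a : ℚ) * (app (Phi D i k) (fun w => D.lam0 w (k + 1)) u -
                  D.lam i u k 1) := by
            rw [h3 a u]; ring
          rw [h5]
          exact (ha u).add ((isInt_int a).mul (hI1 u))
      rw [key false, key true]
      constructor <;> rintro ⟨a, ha⟩ <;> exact ⟨a, by
        first
          | exact (P5 _).mp ha
          | exact (P5 _).mpr ha⟩

variable (D : QOData)

lemma mmul_entry (M N : Mat) (u v : Bool) : mmul M N u v = app M (app N (evec v)) u := by
  rw [← app_mmul, app_evec]

/-- level-0 denominators are independent of the recursion choice -/
lemma m0_indep (i i' : Bool) (u : Bool) : D.m i u 0 = D.m i' u 0 := by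
  have h0 : (0 : ℕ) ≤ D.e - 1 := Nat.zero_le _
  have key : ∀ ii : Bool, D.m ii u 0 = (D.lam0 u 1).den := by
    intro ii
    have h1 : D.lam0 u 1 = (D.n ii u 0 : ℚ) / ((D.m ii u 0 : ℤ) : ℚ) := by
      rw [← D.base ii u 1, D.lead ii u 0 h0]
      norm_cast
    have h2 : (0 : ℤ) < (D.m ii u 0 : ℤ) := by exact_mod_cast D.m_pos ii u 0 h0
    have h3 : Nat.Coprime (D.n ii u 0).natAbs ((D.m ii u 0 : ℤ)).natAbs := by
      have := D.cop ii u 0 h0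
      simpa [Int.gcd] using this
    have h4 := Rat.den_div_eq_of_coprime h2 h3
    rw [← h1] at h4
    simpa using h4.symm
  rw [key i, key i']

lemma prod_pos' (f : ℕ → ℕ) (k : ℕ) (h : ∀ l, l < k → 0 < f l) :
    (0 : ℚ) < ∏ l ∈ Finset.range k, (f l : ℚ) := by
  apply Finset.prod_pos
  intro l hl
  exact_mod_cast h l (Finset.mem_range.mp hl)

lemma dd_pos (i : Bool) (k : ℕ) (hk : k ≤ D.e - 1) : 0 < D.dd i k := by
  rw [← sd_d D i k hk]
  exact (sd D i k hk).d_pos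

lemma intvec_evec (v : Bool) : IntVec (evec v) := by
  intro u
  unfold evec
  split
  · exact isInt_one
  · exact isInt_zero

/-- the key determinant identity: the two total degree products agree -/
lemma proddd_eq (k : ℕ) (hk : k ≤ D.e - 1) :
    (∏ l ∈ Finset.range k, (D.dd false l : ℚ)) =
      ∏ l ∈ Finset.range k, (D.dd true l : ℚ) := by
  obtain ⟨P1, P2, P3, P4, P5⟩ := master D k hk
  have hdd : ∀ i, (0 : ℚ) < ∏ l ∈ Finset.range k, (D.dd i l : ℚ) := fun i =>
    prod_pos' _ k (fun l hl => dd_pos D i l (by omega))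
  have hdet : ∀ i, mdet (Phi D i k) ≠ 0 := fun i => by rw [P3 i]; exact (hdd i).ne'
  have entInt : ∀ u v, IsInt (mmul (Phi D true k) (minv (Phi D false k)) u v) := by
    intro u v
    rw [mmul_entry]
    have hx : app (Phi D false k) (app (minv (Phi D false k)) (evec v)) = evec v :=
      app_minv _ (hdet false) _
    have hiv : IntVec (app (Phi D false k) (app (minv (Phi D false k)) (evec v))) := by
      rw [hx]; exact intvec_evec v
    exact (P5 _).mp hiv u
  have entInt' : ∀ u v, IsInt (mmul (Phi D false k) (minv (Phi D true k)) u v) := by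
    intro u v
    rw [mmul_entry]
    have hx : app (Phi D true k) (app (minv (Phi D true k)) (evec v)) = evec v :=
      app_minv _ (hdet true) _
    have hiv : IntVec (app (Phi D true k) (app (minv (Phi D true k)) (evec v))) := by
      rw [hx]; exact intvec_evec v
    exact (P5 _).mpr hiv u
  obtain ⟨z, hz⟩ := mdet_isInt _ entInt
  obtain ⟨z', hz'⟩ := mdet_isInt _ entInt'
  have hdet1 : mdet (mmul (Phi D true k) (minv (Phi D false k))) =
      mdet (Phi D true k) * (mdet (Phi D false k))⁻¹ := by
    rw [mdet_mmul, mdet_minv _ (hdet false)]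
  have hdet2 : mdet (mmul (Phi D false k) (minv (Phi D true k))) =
      mdet (Phi D false k) * (mdet (Phi D true k))⁻¹ := by
    rw [mdet_mmul, mdet_minv _ (hdet true)]
  have hprod : (z : ℚ) * (z' : ℚ) = 1 := by
    rw [← hz, ← hz', hdet1, hdet2]
    field_simp
    rw [mul_comm]
    exact div_self (mul_ne_zero (hdet false) (hdet true))
  have hzz : z * z' = 1 := by exact_mod_cast hprod
  have hz1 : z = 1 ∨ z = -1 := Int.isUnit_iff.mp (IsUnit.of_mul_eq_one _ hzz)
  have hzpos : (0 : ℚ) < (z : ℚ) := by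
    rw [← hz, hdet1]
    apply mul_pos
    · rw [P3 true]; exact hdd true
    · rw [inv_pos, P3 false]; exact hdd false
  have hz1' : z = 1 := by
    rcases hz1 with h | h
    · exact h
    · exfalso; rw [h] at hzpos; norm_num at hzpos
  have hdeq : mdet (Phi D true k) = mdet (Phi D false k) := by
    have h5 : mdet (Phi D true k) * (mdet (Phi D false k))⁻¹ = 1 := by
      rw [← hdet1, hz, hz1']; norm_num
    have h6 := hdet false
    field_simp at h5
    linarith [h5]
  rw [← P3 false, ← P3 true, hdeq]

/-- integrality and positivity of `M^{(k)}₂₂` -/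
lemma exists_N (k : ℕ) (hk : k ≤ D.e - 1) :
    ∃ N : ℤ, 0 < N ∧ (N : ℚ) =
      ((∏ l ∈ Finset.range k, (D.m true false l : ℚ)) *
        (∏ l ∈ Finset.range k, (D.m false true l : ℚ))) /
        (∏ l ∈ Finset.range k, (D.dd false l : ℚ)) := by
  obtain ⟨P1, P2, P3, P4, P5⟩ := master D k hk
  set B1 := ∏ l ∈ Finset.range k, (D.m true false l : ℚ) with hB1d
  set B2 := ∏ l ∈ Finset.range k, (D.m false true l : ℚ) with hB2d
  set A := ∏ l ∈ Finset.range k, (D.dd false l : ℚ) with hAd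
  have hA : (0 : ℚ) < A := prod_pos' _ k (fun l hl => dd_pos D false l (by omega))
  have hB1 : (0 : ℚ) < B1 := prod_pos' _ k (fun l hl => D.m_pos true false l (by omega))
  have hB2 : (0 : ℚ) < B2 := prod_pos' _ k (fun l hl => D.m_pos false true l (by omega))
  have hdet : mdet (Phi D false k) ≠ 0 := by rw [P3 false]; exact hA.ne'
  set Z : Mat := fun u v => (if u = false then B1 else B2) * minv (Phi D false k) u v with hZd
  have hZ : ∀ u v, IsInt (Z u v) := by
    intro u v
    set x := app (minv (Phi D false k)) (evec v) with hxdef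
    have hx1 : app (Phi D false k) x = evec v := app_minv _ hdet _
    have hIx : IntVec (app (Phi D false k) x) := by rw [hx1]; exact intvec_evec v
    have hIx2 : IntVec (app (Phi D true k) x) := (P5 x).mp hIx
    have hxu : ∀ u, minv (Phi D false k) u v = x u := by
      intro u; rw [hxdef, app_evec]
    cases u
    · have h1 : app (Phi D true k) x false = B1 * x false := by
        have e0 : Phi D true k false true = 0 := P1 true
        have e1 : Phi D true k false false = B1 := P2 true
        show Phi D true k false false * x false + Phi D true k false true * x true = _
        rw [e0, e1]; ring
      have h2 : Z false v = B1 * x false := by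
        rw [hZd]; simp only [if_pos rfl, reduceIte]; rw [hxu]
      rw [h2, ← h1]
      exact hIx2 false
    · have h1 : app (Phi D false k) x true = B2 * x true := by
        have e0 : Phi D false k true false = 0 := P1 false
        have e1 : Phi D false k true true = B2 := P2 false
        show Phi D false k true false * x false + Phi D false k true true * x true = _
        rw [e0, e1]; ring
      have h2 : Z true v = B2 * x true := by
        rw [hZd]; simp only [Bool.true_eq_false, if_false, reduceIte]; rw [hxu]
      rw [h2, ← h1]
      exact hIx true
  have hdz : mdet Z = B1 * B2 * mdet (minv (Phi D false k)) := by
    rw [hZd]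
    simp only [mdet, Bool.true_eq_false, if_false, if_pos rfl, reduceIte]
    ring
  obtain ⟨N, hN⟩ := mdet_isInt Z hZ
  have hNval : (N : ℚ) = B1 * B2 / A := by
    rw [← hN, hdz, mdet_minv _ hdet, P3 false, div_eq_mul_inv]
  have hNpos : (0 : ℚ) < (N : ℚ) := by
    rw [hNval]
    positivity
  exact ⟨N, by exact_mod_cast hNpos, hNval⟩

/-- the diagonal entries of `U^{(k)}` as products -/
lemma Uent : ∀ k : ℕ,
    D.Umat (k + 1) 0 0 =
      ∏ l ∈ Finset.range (k + 1), ((D.b false l : ℚ) / (D.m true false l : ℚ)) ∧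
    D.Umat (k + 1) 1 1 =
      ∏ l ∈ Finset.range (k + 1), ((D.b true l : ℚ) / (D.m false true l : ℚ)) := by
  intro k
  induction k with
  | zero =>
    rw [Finset.prod_range_one, Finset.prod_range_one]
    constructor
    · show (!![(D.b false 0 : ℚ) / (D.m false false 0 : ℚ),
        (D.b false 0 : ℚ) * (D.r false 0 : ℚ) * D.lam0 false 1;
        (D.b true 0 : ℚ) * (D.r true 0 : ℚ) * D.lam0 true 1,
        (D.b true 0 : ℚ) / (D.m true true 0 : ℚ)] : Matrix (Fin 2) (Fin 2) ℚ) 0 0 = _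
      rw [m0_indep D true false false]
      simp
    · show (!![(D.b false 0 : ℚ) / (D.m false false 0 : ℚ),
        (D.b false 0 : ℚ) * (D.r false 0 : ℚ) * D.lam0 false 1;
        (D.b true 0 : ℚ) * (D.r true 0 : ℚ) * D.lam0 true 1,
        (D.b true 0 : ℚ) / (D.m true true 0 : ℚ)] : Matrix (Fin 2) (Fin 2) ℚ) 1 1 = _
      rw [m0_indep D false true true]
      simp
  | succ k IH =>
    constructor
    · show ((D.b false (k + 1) : ℚ) / (D.m true false (k + 1) : ℚ)) * D.Umat (k + 1) 0 0 = _
      conv_rhs => rw [Finset.prod_range_succ]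
      rw [IH.1]
      ring
    · show ((D.b true (k + 1) : ℚ) / (D.m false true (k + 1) : ℚ)) * D.Umat (k + 1) 1 1 = _
      conv_rhs => rw [Finset.prod_range_succ]
      rw [IH.2]
      ring

lemma b_eq_div (i : Bool) (l : ℕ) (hl : l ≤ D.e - 1) :
    (D.b i l : ℚ) = (D.dd i l : ℚ) / (D.m i (!i) l : ℚ) := by
  have h := (sd D i l hl).b_mulQ
  rw [sd_b, sd_d] at h
  have hmo : ((sd D i l hl).mo : ℚ) = (D.m i (!i) l : ℚ) := rfl
  rw [hmo] at h
  have hne : (D.m i (!i) l : ℚ) ≠ 0 := by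
    have := D.m_pos i (!i) l hl
    positivity
  rw [eq_div_iff hne]
  exact h

/-- the diagonal entries of `U^{(k)}` in closed form -/
lemma Uclosed (k : ℕ) (hk1 : 1 ≤ k) (hk : k ≤ D.e - 1) :
    D.Umat k 0 0 =
      (∏ l ∈ Finset.range k, (D.dd false l : ℚ)) /
        ((∏ l ∈ Finset.range k, (D.m true false l : ℚ)) *
          (∏ l ∈ Finset.range k, (D.m false true l : ℚ))) ∧
    D.Umat k 1 1 =
      (∏ l ∈ Finset.range k, (D.dd true l : ℚ)) /
        ((∏ l ∈ Finset.range k, (D.m true false l : ℚ)) *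
          (∏ l ∈ Finset.range k, (D.m false true l : ℚ))) := by
  obtain ⟨k', rfl⟩ : ∃ k', k = k' + 1 := ⟨k - 1, by omega⟩
  obtain ⟨h00, h11⟩ := Uent D k'
  constructor
  · rw [h00]
    have hfac : ∀ l ∈ Finset.range (k' + 1),
        (D.b false l : ℚ) / (D.m true false l : ℚ) =
          (D.dd false l : ℚ) / ((D.m true false l : ℚ) * (D.m false true l : ℚ)) := by
      intro l hl
      have hl' : l ≤ D.e - 1 := by
        have := Finset.mem_range.mp hl; omega
      rw [b_eq_div D false l hl']
      simp only [Bool.not_false]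
      rw [div_div, mul_comm (D.m false true l : ℚ) (D.m true false l : ℚ)]
    rw [Finset.prod_congr rfl hfac, Finset.prod_div_distrib, Finset.prod_mul_distrib]
  · rw [h11]
    have hfac : ∀ l ∈ Finset.range (k' + 1),
        (D.b true l : ℚ) / (D.m false true l : ℚ) =
          (D.dd true l : ℚ) / ((D.m true false l : ℚ) * (D.m false true l : ℚ)) := by
      intro l hl
      have hl' : l ≤ D.e - 1 := by
        have := Finset.mem_range.mp hl; omega
      rw [b_eq_div D true l hl']
      simp only [Bool.not_true]
      rw [div_div]
    rw [Finset.prod_congr rfl hfac, Finset.prod_div_distrib, Finset.prod_mul_distrib]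


end QOProof

/-- The diagonal entries of `U^{(k)}` are equal, with explicit value
`∏_{l<k} d_•^{(l)}(1) / (∏_{l<k} m₁^{(l)}(2) · ∏_{l<k} m₂^{(l)}(1))`, and
`M^{(k)}₂₂ = 1/U^{(k)}₂₂` is a positive integer. -/
theorem Umat_diagonal (D : QOData) (he2 : 2 ≤ D.e) (k : ℕ) (hk1 : 1 ≤ k) (hk : k ≤ D.e - 1) :
    D.Umat k 0 0 = D.Umat k 1 1 ∧
    D.Umat k 1 1 =
      (∏ l ∈ Finset.range k, (D.dd false l : ℚ)) /
        ((∏ l ∈ Finset.range k, (D.m true false l : ℚ)) *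
          (∏ l ∈ Finset.range k, (D.m false true l : ℚ))) ∧
    ∃ N : ℤ, 0 < N ∧ sw (D.Umat k) 1 1 = (N : ℚ) := by
  have hUc := QOProof.Uclosed D k hk1 hk
  have hpe := QOProof.proddd_eq D k hk
  obtain ⟨N, hNpos, hNval⟩ := QOProof.exists_N D k hk
  refine ⟨?_, ?_, ⟨N, hNpos, ?_⟩⟩
  · rw [hUc.1, hUc.2, hpe]
  · rw [hUc.2, ← hpe]
  · have hsw : sw (D.Umat k) 1 1 = 1 / D.Umat k 1 1 := by
      simp [sw]
    rw [hsw, hUc.2, ← hpe, one_div_div]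
    exact hNval.symm
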